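/- Define, for r ∈ (−π/2, π/2), U(r) := 540·(r + π/2) + 80·sin(2r) + 3·sin(4r) + (686/3)·sin(2r)/(sin²r + 1/6), and f(r) := (sin²r + 1/6)·U(r). Then: (1) the function f₁(r) := sin²r + 1/6 satisfies f₁″ + 8·tan(r)·f₁′ − 12·f₁ = 0 on (−π/2, π/2); (2) U is differentiable with U′(r) = 96·cos⁸(r)/(sin²r + 1/6)² on (−π/2, π/2); and (3) f satisfies f″ + 8·tan(r)·f′ − 12·f = 0 on (−π/2, π/2). -/

import Mathlib

noncomputable section

open Real

/-- `U(r) = 540(r + π/2) + 80 sin(2r) + 3 sin(4r) + (686/3) sin(2r)/(sin²r + 1/6)`. -/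
def Ufun (r : ℝ) : ℝ :=
  540 * (r + π / 2) + 80 * Real.sin (2 * r) + 3 * Real.sin (4 * r) +
    (686 / 3) * Real.sin (2 * r) / ((Real.sin r) ^ 2 + 1 / 6)

/-- `f(r) = (sin²r + 1/6)·U(r)`. -/
def ffun (r : ℝ) : ℝ := ((Real.sin r) ^ 2 + 1 / 6) * Ufun r

/-- `f₁(r) = sin²r + 1/6`. -/
def f1fun (r : ℝ) : ℝ := (Real.sin r) ^ 2 + 1 / 6

lemma ht (r : ℝ) : (Real.sin r) ^ 2 + 1 / 6 ≠ 0 := by positivity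

lemma hden (r : ℝ) : HasDerivAt (fun x : ℝ => Real.sin x ^ 2 + 1 / 6)
    (2 * Real.sin r * Real.cos r) r := by
  have := ((Real.hasDerivAt_sin r).pow 2).add_const (1/6 : ℝ)
  refine this.congr_deriv ?_
  ring

lemma hasU (r : ℝ) : HasDerivAt Ufun
    (96 * (Real.cos r) ^ 8 / ((Real.sin r) ^ 2 + 1 / 6) ^ 2) r := by
  have h1 : HasDerivAt (fun x : ℝ => 540 * (x + π / 2)) (540 * 1) r :=
    ((hasDerivAt_id r).add_const (π / 2)).const_mul 540
  have hs2 : HasDerivAt (fun x : ℝ => Real.sin (2 * x)) (Real.cos (2 * r) * 2) r := by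
    have := (Real.hasDerivAt_sin (2 * r)).comp r ((hasDerivAt_id r).const_mul 2)
    simpa [Function.comp_def] using this
  have hs4 : HasDerivAt (fun x : ℝ => Real.sin (4 * x)) (Real.cos (4 * r) * 4) r := by
    have := (Real.hasDerivAt_sin (4 * r)).comp r ((hasDerivAt_id r).const_mul 4)
    simpa [Function.comp_def] using this
  have hq := ((hs2.const_mul ((686 : ℝ) / 3)).div (hden r) (ht r))
  have hall := ((h1.add (hs2.const_mul 80)).add (hs4.const_mul 3)).add hq
  have hUf : Ufun = fun x : ℝ =>
      540 * (x + π / 2) + 80 * Real.sin (2 * x) + 3 * Real.sin (4 * x) +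
        686 / 3 * Real.sin (2 * x) / (Real.sin x ^ 2 + 1 / 6) := rfl
  rw [hUf]
  refine hall.congr_deriv ?_
  symm
  have h2 : Real.sin (2 * r) = 2 * Real.sin r * Real.cos r := Real.sin_two_mul r
  have h2c : Real.cos (2 * r) = 2 * Real.cos r ^ 2 - 1 := Real.cos_two_mul r
  have h4c : Real.cos (4 * r) = 2 * Real.cos (2 * r) ^ 2 - 1 := by
    rw [show (4 : ℝ) * r = 2 * (2 * r) by ring]; exact Real.cos_two_mul (2 * r)
  rw [h4c, h2c, h2]
  have hp := Real.sin_sq_add_cos_sq r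
  field_simp
  linear_combination ((-127008:ℝ) + (181440:ℝ) * Real.cos r ^ 2 + (186624:ℝ) * Real.cos r ^ 4 + (186624:ℝ) * Real.cos r ^ 6 + (-2286144:ℝ) * Real.sin r ^ 2 + (1741824:ℝ) * Real.sin r ^ 2 * Real.cos r ^ 2 + (2052864:ℝ) * Real.sin r ^ 2 * Real.cos r ^ 4 + (2239488:ℝ) * Real.sin r ^ 2 * Real.cos r ^ 6 + (-13716864:ℝ) * Real.sin r ^ 4 + (1306368:ℝ) * Real.sin r ^ 4 * Real.cos r ^ 2 + (4478976:ℝ) * Real.sin r ^ 4 * Real.cos r ^ 4 + (6718464:ℝ) * Real.sin r ^ 4 * Real.cos r ^ 6 + (-27433728:ℝ) * Real.sin r ^ 6 + (-15676416:ℝ) * Real.sin r ^ 6 * Real.cos r ^ 2 + (-6718464:ℝ) * Real.sin r ^ 6 * Real.cos r ^ 4 + (119952:ℝ) + (-171360:ℝ) * Real.cos r ^ 2 + (-176256:ℝ) * Real.cos r ^ 4 + (-176256:ℝ) * Real.cos r ^ 6 + (2243808:ℝ) * Real.sin r ^ 2 + (-1766016:ℝ) * Real.sin r ^ 2 * Real.cos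 r ^ 2 + (-2063232:ℝ) * Real.sin r ^ 2 * Real.cos r ^ 4 + (-2239488:ℝ) * Real.sin r ^ 2 * Real.cos r ^ 6 + (13716864:ℝ) * Real.sin r ^ 4 + (-1306368:ℝ) * Real.sin r ^ 4 * Real.cos r ^ 2 + (-4478976:ℝ) * Real.sin r ^ 4 * Real.cos r ^ 4 + (-6718464:ℝ) * Real.sin r ^ 4 * Real.cos r ^ 6 + (27433728:ℝ) * Real.sin r ^ 6 + (15676416:ℝ) * Real.sin r ^ 6 * Real.cos r ^ 2 + (6718464:ℝ) * Real.sin r ^ 6 * Real.cos r ^ 4) * hp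

/-- On `(-π/2, π/2)`: `f₁` solves `f″ + 8 tan(r) f′ - 12 f = 0`, `U` has derivative
`96 cos⁸r/(sin²r + 1/6)²`, and `f` solves `f″ + 8 tan(r) f′ - 12 f = 0`. -/
theorem ode_solutions :
    (∀ r ∈ Set.Ioo (-(π / 2)) (π / 2),
      deriv (deriv f1fun) r + 8 * Real.tan r * deriv f1fun r - 12 * f1fun r = 0) ∧
    (∀ r ∈ Set.Ioo (-(π / 2)) (π / 2),
      HasDerivAt Ufun (96 * (Real.cos r) ^ 8 / ((Real.sin r) ^ 2 + 1 / 6) ^ 2) r) ∧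
    (∀ r ∈ Set.Ioo (-(π / 2)) (π / 2),
      deriv (deriv ffun) r + 8 * Real.tan r * deriv ffun r - 12 * ffun r = 0) := by
  have hf1eq : f1fun = fun x : ℝ => Real.sin x ^ 2 + 1 / 6 := rfl
  refine ⟨?_, fun r _ => hasU r, ?_⟩
  · intro r hr
    have hc : Real.cos r ≠ 0 := (Real.cos_pos_of_mem_Ioo hr).ne'
    have hp := Real.sin_sq_add_cos_sq r
    have hd1 : deriv f1fun = fun x : ℝ => 2 * Real.sin x * Real.cos x := by
      funext x
      rw [hf1eq]
      exact (hden x).deriv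
    have hd2 : HasDerivAt (fun x : ℝ => 2 * Real.sin x * Real.cos x)
        (2 * (Real.cos r * Real.cos r + Real.sin r * -Real.sin r)) r := by
      have := ((Real.hasDerivAt_sin r).mul (Real.hasDerivAt_cos r)).const_mul (2 : ℝ)
      simpa [mul_assoc] using this
    rw [hd1, hd2.deriv, hf1eq, Real.tan_eq_sin_div_cos]
    field_simp
    linear_combination 12 * hp
  · intro r hr
    have hc : Real.cos r ≠ 0 := (Real.cos_pos_of_mem_Ioo hr).ne'
    have hp := Real.sin_sq_add_cos_sq r
    have hfx : ∀ x : ℝ, HasDerivAt ffun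
        (2 * Real.sin x * Real.cos x * Ufun x +
          (Real.sin x ^ 2 + 1 / 6) * (96 * Real.cos x ^ 8 / (Real.sin x ^ 2 + 1 / 6) ^ 2)) x :=
      fun x => (hden x).mul (hasU x)
    have hder : deriv ffun = fun x : ℝ =>
        2 * Real.sin x * Real.cos x * Ufun x + 96 * Real.cos x ^ 8 / (Real.sin x ^ 2 + 1 / 6) := by
      funext x
      rw [(hfx x).deriv]
      have hx := ht x
      field_simp
    have hA : HasDerivAt (fun x : ℝ => 2 * Real.sin x * Real.cos x)
        (2 * (Real.cos r * Real.cos r + Real.sin r * -Real.sin r)) r := by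
      have := ((Real.hasDerivAt_sin r).mul (Real.hasDerivAt_cos r)).const_mul (2 : ℝ)
      simpa [mul_assoc] using this
    have hB := hA.mul (hasU r)
    have hC : HasDerivAt (fun x : ℝ => 96 * Real.cos x ^ 8)
        (96 * (8 * Real.cos r ^ 7 * -Real.sin r)) r := by
      have := ((Real.hasDerivAt_cos r).pow 8).const_mul (96 : ℝ)
      simpa [mul_assoc] using this
    have hD := hC.div (hden r) (ht r)
    have hF := hB.add hD
    have hffr : ffun r = (Real.sin r ^ 2 + 1 / 6) * Ufun r := rfl
    rw [hder]
    simp only []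
    rw [show deriv (fun x : ℝ => 2 * Real.sin x * Real.cos x * Ufun x + 96 * Real.cos x ^ 8 / (Real.sin x ^ 2 + 1 / 6)) r = _ from hF.deriv, hffr, Real.tan_eq_sin_div_cos]
    field_simp
    linear_combination ((72:ℝ) * Real.cos r ^ 1 * Ufun r + (2160:ℝ) * Real.sin r ^ 2 * Real.cos r ^ 1 * Ufun r + (25920:ℝ) * Real.sin r ^ 4 * Real.cos r ^ 1 * Ufun r + (155520:ℝ) * Real.sin r ^ 6 * Real.cos r ^ 1 * Ufun r + (466560:ℝ) * Real.sin r ^ 8 * Real.cos r ^ 1 * Ufun r + (559872:ℝ) * Real.sin r ^ 10 * Real.cos r ^ 1 * Ufun r + (12:ℝ) * Ufun r + (-72:ℝ) * Real.cos r ^ 1 * Ufun r + (144:ℝ) * Real.sin r ^ 2 * Ufun r + (-2160:ℝ) * Real.sin r ^ 2 * Real.cos r ^ 1 * Ufun r + (432:ℝ) * Real.sin r ^ 4 * Ufun r + (-25920:ℝ) * Real.sin r ^ 4 * Real.cos r ^ 1 * Ufun r + (-155520:ℝ) * Real.sin r ^ 6 * Real.cos r ^ 1 * Ufun r + (-466560:ℝ)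 * Real.sin r ^ 8 * Real.cos r ^ 1 * Ufun r + (-559872:ℝ) * Real.sin r ^ 10 * Real.cos r ^ 1 * Ufun r) * hp
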